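/- (Pointwise form of the first-variation formula for the distance δ between metrics, equation (2) of Section 1.) Let E be a nonzero finite-dimensional real vector space, let g be a positive definite symmetric bilinear form on E and let h be a symmetric bilinear form on E. Then lim_{t→0⁺} δ(g, g + t h)/t = ( M² + m² )^{1/2}, where M = max_{v ≠ 0} h(v,v)/g(v,v) and m = min_{v ≠ 0} h(v,v)/g(v,v). (For t > 0 small enough, g + t h is positive definite, so δ(g, g+th) is defined.) -/
import Mathlib

/-- The set of Rayleigh quotients `h(v,v)/g(v,v)` over nonzero vectors `v`. -/
def rayleighSet {E : Type*} [AddCommGroup E] [Module ℝ E]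
    (g h : E →ₗ[ℝ] E →ₗ[ℝ] ℝ) : Set ℝ :=
  {x | ∃ v : E, v ≠ 0 ∧ x = h v v / g v v}

/-- The distance `δ(g₁,g₂)` between two (positive definite) symmetric bilinear forms:
`δ(g₁,g₂) = ((ln sup_{v≠0} g₁(v,v)/g₂(v,v))² + (ln sup_{v≠0} g₂(v,v)/g₁(v,v))²)^{1/2}`. -/
noncomputable def metricsDist {E : Type*} [AddCommGroup E] [Module ℝ E]
    (g₁ g₂ : E →ₗ[ℝ] E →ₗ[ℝ] ℝ) : ℝ :=
  Real.sqrt ((Real.log (sSup (rayleighSet g₂ g₁))) ^ 2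
    + (Real.log (sSup (rayleighSet g₁ g₂))) ^ 2)

theorem rayleigh_compact {E : Type*} [AddCommGroup E] [Module ℝ E] [FiniteDimensional ℝ E]
    [Nontrivial E]
    (g h : E →ₗ[ℝ] E →ₗ[ℝ] ℝ)
    (hg_pos : ∀ v : E, v ≠ 0 → 0 < g v v) :
    IsCompact (rayleighSet g h) := by
  set b := Module.finBasis ℝ E with hb
  set n := Module.finrank ℝ E with hn
  set φ : (Fin n → ℝ) ≃ₗ[ℝ] E := b.equivFun.symm with hφ
  have hφne : ∀ x : Fin n → ℝ, x ≠ 0 → φ x ≠ 0 := fun x hx =>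
    φ.map_ne_zero_iff.2 hx
  have hexp : ∀ (f : E →ₗ[ℝ] E →ₗ[ℝ] ℝ) (x : Fin n → ℝ),
      f (φ x) (φ x) = ∑ i, ∑ j, x i * (x j * f (b j) (b i)) := by
    intro f x
    show f (b.equivFun.symm x) (b.equivFun.symm x) = _
    rw [Module.Basis.equivFun_symm_apply]
    simp [map_sum, Finset.sum_apply, mul_assoc, Finset.mul_sum]
  have hcont : ∀ (f : E →ₗ[ℝ] E →ₗ[ℝ] ℝ), Continuous fun x : Fin n → ℝ => f (φ x) (φ x) := by
    intro f
    have : (fun x : Fin n → ℝ => f (φ x) (φ x))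
        = fun x => ∑ i, ∑ j, x i * (x j * f (b j) (b i)) := funext (hexp f)
    rw [this]
    exact continuous_finset_sum _ fun i _ => continuous_finset_sum _ fun j _ =>
      (continuous_apply i).mul ((continuous_apply j).mul continuous_const)
  have hscale : ∀ (c : ℝ), c ≠ 0 → ∀ v : E, v ≠ 0 →
      h (c • v) (c • v) / g (c • v) (c • v) = h v v / g v v := by
    intro c hc v hv
    simp only [map_smul, LinearMap.smul_apply, smul_eq_mul]
    rw [mul_div_mul_left _ _ hc, mul_div_mul_left _ _ hc]
  have key : rayleighSet g h
      = (fun x : Fin n → ℝ => h (φ x) (φ x) / g (φ x) (φ x)) '' Metric.sphere 0 1 := by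
    ext x
    constructor
    · rintro ⟨v, hv, rfl⟩
      set u := b.equivFun v with hu
      have hune : u ≠ 0 := by simpa [hu] using (b.equivFun.map_ne_zero_iff).2 hv
      have hnu : ‖u‖ ≠ 0 := norm_ne_zero_iff.2 hune
      refine ⟨‖u‖⁻¹ • u, ?_, ?_⟩
      · simp [mem_sphere_zero_iff_norm, norm_smul, abs_of_pos, inv_mul_cancel₀ hnu]
      · have hφu : φ (‖u‖⁻¹ • u) = ‖u‖⁻¹ • v := by
          rw [map_smul, hu, hφ]
          exact congrArg _ (b.equivFun.symm_apply_apply v)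
        show h (φ _) (φ _) / g (φ _) (φ _) = _
        rw [hφu, hscale _ (inv_ne_zero hnu) v hv]
    · rintro ⟨y, hy, rfl⟩
      have hyne : y ≠ 0 := by
        intro h0; rw [mem_sphere_zero_iff_norm, h0] at hy; simp at hy
      exact ⟨φ y, hφne y hyne, rfl⟩
  rw [key]
  apply (isCompact_sphere (0 : Fin n → ℝ) 1).image_of_continuousOn
  exact ((hcont h).continuousOn).div ((hcont g).continuousOn)
    (fun y hy => (hg_pos _ (hφne y (by
      intro h0; rw [mem_sphere_zero_iff_norm, h0] at hy; simp at hy))).ne')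

theorem log_one_add_mul_div_tendsto (c : ℝ) :
    Filter.Tendsto (fun t : ℝ => Real.log (1 + t * c) / t)
      (nhdsWithin 0 (Set.Ioi 0)) (nhds c) := by
  have h1 : HasDerivAt (fun t : ℝ => 1 + t * c) c 0 := by
    simpa using ((hasDerivAt_id (0:ℝ)).mul_const c).const_add 1
  have hd : HasDerivAt (fun t : ℝ => Real.log (1 + t * c)) c 0 := by
    have := h1.log (by norm_num : (1:ℝ) + 0 * c ≠ 0)
    simpa using this
  rw [hasDerivAt_iff_tendsto_slope] at hd
  have := hd.mono_left (nhdsWithin_mono 0 (fun x (hx : x ∈ Set.Ioi 0) => ne_of_gt hx))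
  refine this.congr fun t => ?_
  simp [slope_def_field, div_eq_mul_inv]

/-- Pointwise form of the first-variation formula for the distance `δ` between metrics:
`lim_{t→0⁺} δ(g, g+th)/t = (M² + m²)^{1/2}` where `M` and `m` are the max and min of the
Rayleigh quotient `h(v,v)/g(v,v)` over nonzero `v`. -/
theorem stmt4 {E : Type*} [AddCommGroup E] [Module ℝ E] [FiniteDimensional ℝ E]
    [Nontrivial E]
    (g h : E →ₗ[ℝ] E →ₗ[ℝ] ℝ)
    (hg_symm : ∀ v w : E, g v w = g w v)
    (hg_pos : ∀ v : E, v ≠ 0 → 0 < g v v)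
    (hh_symm : ∀ v w : E, h v w = h w v) :
    Filter.Tendsto (fun t : ℝ => metricsDist g (g + t • h) / t)
      (nhdsWithin 0 (Set.Ioi 0))
      (nhds (Real.sqrt ((sSup (rayleighSet g h)) ^ 2 + (sInf (rayleighSet g h)) ^ 2))) := by
  classical
  set R := rayleighSet g h with hRdef
  obtain ⟨v0, hv0⟩ := exists_ne (0 : E)
  have hRne : R.Nonempty := ⟨h v0 v0 / g v0 v0, v0, hv0, rfl⟩
  have hRc : IsCompact R := rayleigh_compact g h hg_pos
  set M := sSup R with hMdef
  set m := sInf R with hmdef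
  have hbddA : BddAbove R := hRc.bddAbove
  have hbddB : BddBelow R := hRc.bddBelow
  have hMmem : M ∈ R := hRc.sSup_mem hRne
  have hmmem : m ∈ R := hRc.sInf_mem hRne
  set ε := (1 + |m| + |M|)⁻¹ with hεdef
  have hden : (0:ℝ) < 1 + |m| + |M| := by positivity
  have hεpos : 0 < ε := inv_pos.2 hden
  have heq : ∀ t ∈ Set.Ioo (0:ℝ) ε,
      metricsDist g (g + t • h) / t
        = Real.sqrt ((Real.log (1 + t*m)/t)^2 + (Real.log (1 + t*M)/t)^2) := by
    intro t ht
    obtain ⟨ht0, htε⟩ := ht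
    have htc : t * (1 + |m| + |M|) < 1 := by
      have := mul_lt_mul_of_pos_right htε hden
      rwa [hεdef, inv_mul_cancel₀ hden.ne'] at this
    have h1m : 0 < 1 + t * m := by nlinarith [neg_abs_le m, abs_nonneg M, ht0.le]
    have h1M : 0 < 1 + t * M := by nlinarith [neg_abs_le M, abs_nonneg m, ht0.le]
    have hpos : ∀ v : E, v ≠ 0 → 0 < 1 + t * (h v v / g v v) := by
      intro v hv
      have hrm : m ≤ h v v / g v v := csInf_le hbddB ⟨v, hv, rfl⟩
      nlinarith [ht0.le]
    have happly : ∀ v : E, ((g + t • h) v) v = g v v + t * h v v := by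
      intro v; simp [LinearMap.add_apply, LinearMap.smul_apply, smul_eq_mul]
    have hfact : ∀ v : E, v ≠ 0 → g v v + t * h v v = g v v * (1 + t * (h v v / g v v)) := by
      intro v hv
      field_simp [(hg_pos v hv).ne']
    have hSup1 : sSup (rayleighSet g (g + t • h)) = 1 + t * M := by
      apply IsGreatest.csSup_eq
      constructor
      · obtain ⟨v, hv, hvM⟩ := hMmem
        refine ⟨v, hv, ?_⟩
        rw [happly, hfact v hv, mul_div_cancel_left₀ _ (hg_pos v hv).ne', hvM]
      · rintro x ⟨v, hv, rfl⟩
        rw [happly, hfact v hv, mul_div_cancel_left₀ _ (hg_pos v hv).ne']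
        have : h v v / g v v ≤ M := le_csSup hbddA ⟨v, hv, rfl⟩
        nlinarith [ht0.le]
    have hSup2 : sSup (rayleighSet (g + t • h) g) = (1 + t * m)⁻¹ := by
      apply IsGreatest.csSup_eq
      constructor
      · obtain ⟨v, hv, hvm⟩ := hmmem
        refine ⟨v, hv, ?_⟩
        rw [happly, hfact v hv, div_mul_eq_div_div, div_self (hg_pos v hv).ne', one_div, ← hvm]
      · rintro x ⟨v, hv, rfl⟩
        rw [happly, hfact v hv, div_mul_eq_div_div, div_self (hg_pos v hv).ne', one_div]
        have hrm : m ≤ h v v / g v v := csInf_le hbddB ⟨v, hv, rfl⟩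
        have := hpos v hv
        gcongr <;> linarith
    have hmd : metricsDist g (g + t • h)
        = Real.sqrt ((Real.log (1 + t*m))^2 + (Real.log (1 + t*M))^2) := by
      rw [metricsDist, hSup2, hSup1, Real.log_inv, neg_sq]
    rw [hmd]
    have hA : (Real.log (1+t*m))^2 + (Real.log (1+t*M))^2
        = ((Real.log (1+t*m)/t)^2 + (Real.log (1+t*M)/t)^2) * t^2 := by
      field_simp
    rw [hA, Real.sqrt_mul (by positivity), Real.sqrt_sq ht0.le, mul_div_assoc,
      div_self ht0.ne', mul_one]
  have hev : (fun t : ℝ => metricsDist g (g + t • h) / t) =ᶠ[nhdsWithin 0 (Set.Ioi 0)]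
      (fun t => Real.sqrt ((Real.log (1 + t*m)/t)^2 + (Real.log (1 + t*M)/t)^2)) :=
    Filter.eventually_of_mem (Ioo_mem_nhdsGT_of_mem ⟨le_refl 0, hεpos⟩) heq
  rw [Filter.tendsto_congr' hev, show M^2 + m^2 = m^2 + M^2 by ring]
  exact (Real.continuous_sqrt.tendsto (m^2 + M^2)).comp
    (((log_one_add_mul_div_tendsto m).pow 2).add ((log_one_add_mul_div_tendsto M).pow 2))
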